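/- The theory T_2n is stably finite: for every quantifier-free Σ_P-formula φ and every model A of T_2n with a valuation satisfying φ, there is a model B of T_2n with a valuation satisfying φ such that the domain of B is finite and |B| ≤ |A|. -/

import Mathlib

open FirstOrder FirstOrder.Language

/-- The signature Σ_P with a single unary predicate symbol `P`. -/
def LP : FirstOrder.Language :=
  ⟨fun _ => Empty, fun n => match n with | 1 => Unit | _ => Empty⟩

/-- The unary predicate symbol of `LP`. -/
def PSymb : LP.Relations 1 := Unit.unit

/-- The interpretation of the predicate symbol `P` in an `LP`-structure. -/
def PPred (M : Type) (inst : LP.Structure M) (a : M) : Prop :=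
  inst.RelMap PSymb ![a]

/-- Realization of a formula, with the structure instance given explicitly. -/
def RealizeP {α : Type} (M : Type) (inst : LP.Structure M) (φ : LP.Formula α) (v : α → M) : Prop :=
  letI := inst
  φ.Realize v

/-- `M` is a model of T_2n, axiomatized by `{ψ_n^P → ψ_{≥2n} : n ≥ 1}`: if there are at
least `n` distinct elements satisfying `P`, then there are at least `2n` elements. -/
def ModelT2n (M : Type) (inst : LP.Structure M) : Prop :=
  ∀ n : ℕ, 1 ≤ n →
    (∃ x : Fin n → M, Function.Injective x ∧ ∀ i, PPred M inst (x i)) →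
    ∃ y : Fin (2 * n) → M, Function.Injective y

/-- An `LP`-structure determined by a unary predicate `p`. -/
def mkStruct (M : Type) (p : M → Prop) : LP.Structure M where
  funMap := fun {_} f _ => Empty.elim f
  RelMap := fun {n} r xs => match n, r, xs with
    | 1, _, xs => p (xs 0)

lemma term_eq_var {γ : Type*} (t : LP.Term γ) : ∃ c, t = Term.var c := by
  cases t with
  | var c => exact ⟨c, rfl⟩
  | func f ts => exact Empty.elim f

lemma realize_congr {α : Type} {n : ℕ} {M : Type} (i1 i2 : LP.Structure M)
    {φ : LP.BoundedFormula α n} (hφ : φ.IsQF) (v : α → M) (xs : Fin n → M)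
    (h : ∀ s : α ⊕ Fin n,
      (i1.RelMap PSymb ![Sum.elim v xs s] ↔ i2.RelMap PSymb ![Sum.elim v xs s])) :
    (@BoundedFormula.Realize LP M i1 α n φ v xs ↔ @BoundedFormula.Realize LP M i2 α n φ v xs) := by
  induction hφ with
  | falsum => rfl
  | of_isAtomic hA =>
    cases hA with
    | equal t₁ t₂ =>
      obtain ⟨c₁, rfl⟩ := term_eq_var t₁
      obtain ⟨c₂, rfl⟩ := term_eq_var t₂
      rfl
    | @rel l R ts =>
      match l, R with
      | 1, R =>
        obtain ⟨c, hc⟩ := term_eq_var (ts 0)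
        have hts : ∀ (i3 : LP.Structure M),
            (fun i => @Term.realize LP M i3 _ (Sum.elim v xs) (ts i)) = ![Sum.elim v xs c] := by
          intro i3
          funext i
          have : i = 0 := Subsingleton.elim i 0
          subst this
          rw [hc]
          simp [Term.realize]
        show i1.RelMap R _ ↔ i2.RelMap R _
        rw [hts i1, hts i2]
        cases R
        exact h c
  | imp h1 h2 ih1 ih2 => exact imp_congr ih1 ih2

lemma aux_stably_finite (α : Type) [DecidableEq α] (φ : LP.Formula α) (hφ : φ.IsQF)
    (M : Type) (instM : LP.Structure M) (hM : ModelT2n M instM)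
    (v : α → M) (hv : RealizeP M instM φ v)
    (S : Finset M) (hS : ∀ a ∈ φ.freeVarFinset, v a ∈ S)
    (hne : Nonempty α → S.Nonempty) :
    ∃ (N : Type) (instN : LP.Structure N), ModelT2n N instN ∧ Finite N ∧
      Cardinal.mk N ≤ Cardinal.mk M ∧ ∃ w : α → N, RealizeP N instN φ w := by
  classical
  -- the set of P-elements of S
  set Sp : Finset M := S.filter (fun m => PPred M instM m) with hSp
  set k : ℕ := Sp.card with hk
  -- a finite superset T of S with at least 2*k elements
  obtain ⟨T, hST, hTcard⟩ : ∃ T : Finset M, S ⊆ T ∧ 2 * k ≤ T.card := by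
    rcases Nat.eq_zero_or_pos k with hk0 | hk1
    · exact ⟨S, Finset.Subset.refl S, by omega⟩
    · obtain ⟨y, hy⟩ := hM k hk1 ⟨fun i => (Sp.equivFin.symm i : M),
        fun i j hij => by
          have := Sp.equivFin.symm.injective (Subtype.coe_injective hij)
          exact this,
        fun i => (Finset.mem_filter.1 (Sp.equivFin.symm i).2).2⟩
      refine ⟨S ∪ Finset.image y Finset.univ, Finset.subset_union_left, ?_⟩
      calc 2 * k = (Finset.image y Finset.univ).card := by
            rw [Finset.card_image_of_injective _ hy, Finset.card_univ, Fintype.card_fin]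
        _ ≤ _ := Finset.card_le_card Finset.subset_union_right
  set p : M → Prop := fun m => m ∈ S ∧ PPred M instM m with hp
  set N := {x // x ∈ T} with hN
  set instN : LP.Structure N := mkStruct N (fun x => p ↑x) with hinstN
  set instM' : LP.Structure M := mkStruct M p with hinstM'
  refine ⟨N, instN, ?_, ?_, ?_, ?_⟩
  · -- ModelT2n
    rintro n hn ⟨x, hxinj, hxP⟩
    have hxS : ∀ i, (↑(x i) : M) ∈ Sp := by
      intro i
      have := hxP i
      rw [show PPred N instN (x i) ↔ p ↑(x i) from Iff.rfl] at this
      exact Finset.mem_filter.2 ⟨this.1, this.2⟩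
    have hnk : n ≤ k := by
      have : Function.Injective (fun i : Fin n => (⟨↑(x i), hxS i⟩ : Sp)) := by
        intro i j hij
        simp only [Subtype.mk.injEq] at hij
        exact hxinj (Subtype.coe_injective hij)
      simpa [hk] using Fintype.card_le_of_injective _ this
    have h2n : 2 * n ≤ T.card := le_trans (by omega) hTcard
    exact ⟨fun i => T.equivFin.symm (Fin.castLE h2n i),
      fun i j hij => by
        have := T.equivFin.symm.injective hij
        exact Fin.castLE_injective h2n this⟩
  · exact Finite.of_fintype N
  · exact Cardinal.mk_subtype_le _
  · -- realization
    have hdef : ∀ a : α, ∃ m : M, m ∈ S ∧ (a ∈ φ.freeVarFinset → m = v a) := by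
      intro a
      by_cases h : a ∈ φ.freeVarFinset
      · exact ⟨v a, hS a h, fun _ => rfl⟩
      · obtain ⟨m, hm⟩ := hne ⟨a⟩
        exact ⟨m, hm, fun h' => absurd h' h⟩
    choose wv hwS hwv using hdef
    set w : α → N := fun a => ⟨wv a, hST (hwS a)⟩ with hw
    refine ⟨w, ?_⟩
    -- step 1: replace v by wv (they agree on free variables)
    have h1 : RealizeP M instM φ wv := by
      letI := instM
      have hsub : ↑φ.freeVarFinset ⊆ (↑φ.freeVarFinset : Set α) := Set.Subset.rfl
      have e1 := BoundedFormula.realize_restrictFreeVar' (M := M) hsub (v := v)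
        (xs := (default : Fin 0 → M))
      have e2 := BoundedFormula.realize_restrictFreeVar' (M := M) hsub (v := wv)
        (xs := (default : Fin 0 → M))
      have hvw : (v ∘ Subtype.val : (↑φ.freeVarFinset : Set α) → M) = (wv ∘ Subtype.val) := by
        funext b
        exact (hwv b b.2).symm
      show BoundedFormula.Realize φ wv default
      rw [← e2, ← hvw, e1]
      exact hv
    -- step 2: move to the modified structure instM'
    have h2 : @BoundedFormula.Realize LP M instM' α 0 φ wv default := by
      rw [← realize_congr instM instM' hφ wv default ?_]
      · exact h1
      · rintro (a | i)
        · show PPred M instM (wv a) ↔ PPred M instM' (wv a)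
          have : PPred M instM' (wv a) ↔ p (wv a) := Iff.rfl
          rw [this, hp]
          simp only [Sum.elim_inl]
          exact (and_iff_right (hwS a)).symm
        · exact i.elim0
    -- step 3: use the embedding N ↪ M
    letI := instM'
    letI := instN
    let f : @Language.Embedding LP N M instN instM' :=
      { toFun := Subtype.val
        inj' := Subtype.coe_injective
        map_fun' := fun {n} g _ => Empty.elim g
        map_rel' := fun {n} r x => by
          match n, r with
          | 1, r => exact Iff.rfl }
    have h4 := (BoundedFormula.IsQF.realize_embedding hφ f (v := w)
      (xs := (default : Fin 0 → N)))
    show BoundedFormula.Realize φ w default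
    rw [← h4]
    have : (f ∘ w : α → M) = wv := rfl
    have hxs : (f ∘ (default : Fin 0 → N)) = (default : Fin 0 → M) := Subsingleton.elim _ _
    rw [this, hxs]
    exact h2

/-- The theory T_2n is stably finite: for every quantifier-free formula φ and model of
T_2n with a valuation satisfying φ, there is a finite model of T_2n, of size at most that
of the given model, with a valuation satisfying φ. -/
theorem stmt_9 (α : Type) (φ : LP.Formula α) (hφ : φ.IsQF)
    (M : Type) (instM : LP.Structure M) (hM : ModelT2n M instM)
    (v : α → M) (hv : RealizeP M instM φ v) :
    ∃ (N : Type) (instN : LP.Structure N), ModelT2n N instN ∧ Finite N ∧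
      Cardinal.mk N ≤ Cardinal.mk M ∧ ∃ w : α → N, RealizeP N instN φ w := by
  classical
  rcases isEmpty_or_nonempty α with hα | hα
  · exact aux_stably_finite α φ hφ M instM hM v hv ∅
      (fun a _ => (hα.false a).elim) (fun h => (hα.false h.some).elim)
  · refine aux_stably_finite α φ hφ M instM hM v hv
      (insert (v (Classical.arbitrary α)) (φ.freeVarFinset.image v)) ?_ ?_
    · intro a ha
      exact Finset.mem_insert_of_mem (Finset.mem_image_of_mem v ha)
    · intro _
      exact Finset.insert_nonempty _ _
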